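/- (Schur test with weights.) Let (X, μ) be a σ-finite measure space, K : X × X → [0,∞) measurable, 1 < p < ∞ with conjugate exponent p′, and suppose there exist measurable functions u, v : X → (0,∞) and a constant C > 0 such that ∫ K(x,y) u(y)^{p′} dμ(y) ≤ C v(x)^{p′} for a.e. x and ∫ K(x,y) v(x)^{p} dμ(x) ≤ C u(y)^{p} for a.e. y. Then the operator (Tf)(x) = ∫ K(x,y) f(y) dμ(y) is bounded on L_p(X, μ) with operator norm at most C. -/

import Mathlib

open MeasureTheory Set
open scoped ENNReal

private lemma ofReal_integral_le_lintegral_aux {X : Type*} [MeasurableSpace X] (μ : Measure X)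
    (g : X → ℝ) (hg : ∀ x, 0 ≤ g x) :
    ENNReal.ofReal (∫ x, g x ∂μ) ≤ ∫⁻ x, ENNReal.ofReal (g x) ∂μ := by
  by_cases hgi : Integrable g μ
  · exact le_of_eq (ofReal_integral_eq_lintegral_ofReal hgi (Filter.Eventually.of_forall hg))
  · rw [integral_undef hgi]; simp

/-- Schur test with weights -/
theorem schur_test_weighted
    {X : Type*} [MeasurableSpace X] (μ : Measure X) [SigmaFinite μ]
    (p : ℝ) (hp : 1 < p) (K : X → X → ℝ)
    (hKmeas : Measurable (Function.uncurry K))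
    (hKpos : ∀ x y, 0 ≤ K x y)
    (u v : X → ℝ) (hu : ∀ x, 0 < u x) (hv : ∀ x, 0 < v x)
    (humeas : Measurable u) (hvmeas : Measurable v)
    (C : ℝ) (hC : 0 < C)
    (hSchur₁ : ∀ᵐ x ∂μ,
      (∫⁻ y, ENNReal.ofReal (K x y * u y ^ (p / (p - 1))) ∂μ)
        ≤ ENNReal.ofReal (C * v x ^ (p / (p - 1))))
    (hSchur₂ : ∀ᵐ y ∂μ,
      (∫⁻ x, ENNReal.ofReal (K x y * v x ^ p) ∂μ)
        ≤ ENNReal.ofReal (C * u y ^ p)) :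
    ∀ f : X → ℝ, Measurable f → (∫⁻ x, ENNReal.ofReal (|f x| ^ p) ∂μ) < ⊤ →
      (∫⁻ x, ENNReal.ofReal (|∫ y, K x y * f y ∂μ| ^ p) ∂μ)
        ≤ ENNReal.ofReal (C ^ p) * ∫⁻ x, ENNReal.ofReal (|f x| ^ p) ∂μ := by
  intro f hf _hfp
  set q : ℝ := p / (p - 1) with hq_def
  have hpq : p.HolderConjugate q := Real.HolderConjugate.conjExponent hp
  have hqp : q.HolderConjugate p := hpq.symm
  have hp0 : 0 < p := hpq.pos
  have hq0 : 0 < q := hqp.pos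
  -- ENNReal versions of everything
  set 𝒦 : X → X → ℝ≥0∞ := fun x y => ENNReal.ofReal (K x y) with h𝒦
  set F : X → ℝ≥0∞ := fun y => ENNReal.ofReal |f y| with hF
  set U : X → ℝ≥0∞ := fun y => ENNReal.ofReal (u y) with hU
  set V : X → ℝ≥0∞ := fun x => ENNReal.ofReal (v x) with hV
  have hU0 : ∀ y, U y ≠ 0 := fun y => by
    simp [hU, ENNReal.ofReal_eq_zero, not_le, hu y, (hu y).not_ge]
  have hUtop : ∀ y, U y ≠ ⊤ := fun y => ENNReal.ofReal_ne_top
  have h𝒦meas : Measurable fun z : X × X => 𝒦 z.1 z.2 := hKmeas.ennreal_ofReal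
  have h𝒦measx : ∀ x, Measurable fun y => 𝒦 x y :=
    fun x => h𝒦meas.comp (measurable_prodMk_left)
  have hFmeas : Measurable F := hf.abs.ennreal_ofReal
  have hUmeas : Measurable U := humeas.ennreal_ofReal
  have hVmeas : Measurable V := hvmeas.ennreal_ofReal
  have hrpow : ∀ r : ℝ, Measurable fun a : ℝ≥0∞ => a ^ r :=
    fun r => ENNReal.continuous_rpow_const.measurable
  set W : X → ℝ≥0∞ := fun y => F y * (U y)⁻¹ with hW
  have hWmeas : Measurable W := hFmeas.mul hUmeas.inv
  -- Step 1: pointwise reduction to lintegral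
  have step1 : ∀ x, ENNReal.ofReal (|∫ y, K x y * f y ∂μ| ^ p)
      ≤ (∫⁻ y, 𝒦 x y * F y ∂μ) ^ p := by
    intro x
    rw [← ENNReal.ofReal_rpow_of_nonneg (abs_nonneg _) hp0.le]
    refine ENNReal.rpow_le_rpow ?_ hp0.le
    calc ENNReal.ofReal |∫ y, K x y * f y ∂μ|
        ≤ ENNReal.ofReal (∫ y, |K x y * f y| ∂μ) := by
          refine ENNReal.ofReal_le_ofReal ?_
          have h := norm_integral_le_integral_norm (μ := μ) (fun y => K x y * f y)
          simp only [Real.norm_eq_abs] at h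
          exact h
      _ ≤ ∫⁻ y, ENNReal.ofReal |K x y * f y| ∂μ :=
          ofReal_integral_le_lintegral_aux μ _ (fun y => abs_nonneg _)
      _ = ∫⁻ y, 𝒦 x y * F y ∂μ := by
          refine lintegral_congr fun y => ?_
          rw [abs_mul, abs_of_nonneg (hKpos x y), ENNReal.ofReal_mul (hKpos x y)]
  -- Step 2: Hölder
  set A : X → ℝ≥0∞ := fun x => ∫⁻ y, 𝒦 x y * U y ^ q ∂μ with hA
  set B : X → ℝ≥0∞ := fun x => ∫⁻ y, 𝒦 x y * W y ^ p ∂μ with hB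
  have step2 : ∀ x, (∫⁻ y, 𝒦 x y * F y ∂μ) ^ p ≤ A x ^ (p / q) * B x := by
    intro x
    have holder : (∫⁻ y, 𝒦 x y * F y ∂μ)
        ≤ A x ^ (1 / q) * B x ^ (1 / p) := by
      have h1 : ∀ y, 𝒦 x y * F y = (𝒦 x y ^ (1/q) * U y) * (𝒦 x y ^ (1/p) * W y) := by
        intro y
        have : 𝒦 x y ^ (1/q) * 𝒦 x y ^ (1/p) = 𝒦 x y := by
          rw [← ENNReal.rpow_add_of_nonneg _ _ (by positivity) (by positivity)]
          rw [show (1/q + 1/p : ℝ) = 1 by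
            have := hqp.inv_add_inv_eq_one; rw [one_div, one_div]; linarith]
          exact ENNReal.rpow_one _
        calc 𝒦 x y * F y = (𝒦 x y ^ (1/q) * 𝒦 x y ^ (1/p)) * F y := by rw [this]
          _ = (𝒦 x y ^ (1/q) * U y) * (𝒦 x y ^ (1/p) * (F y * (U y)⁻¹)) := by
              have hUU : U y * (U y)⁻¹ = 1 := ENNReal.mul_inv_cancel (hU0 y) (hUtop y)
              calc (𝒦 x y ^ (1/q) * 𝒦 x y ^ (1/p)) * F y
                  = (𝒦 x y ^ (1/q) * 𝒦 x y ^ (1/p)) * F y * (U y * (U y)⁻¹) := by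
                    rw [hUU, mul_one]
                _ = (𝒦 x y ^ (1/q) * U y) * (𝒦 x y ^ (1/p) * (F y * (U y)⁻¹)) := by ring
      have h2 : ∀ y, (𝒦 x y ^ (1/q) * U y) ^ q = 𝒦 x y * U y ^ q := by
        intro y
        rw [ENNReal.mul_rpow_of_nonneg _ _ hq0.le, ← ENNReal.rpow_mul,
          one_div_mul_cancel hq0.ne', ENNReal.rpow_one]
      have h3 : ∀ y, (𝒦 x y ^ (1/p) * W y) ^ p = 𝒦 x y * W y ^ p := by
        intro y
        rw [ENNReal.mul_rpow_of_nonneg _ _ hp0.le, ← ENNReal.rpow_mul,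
          one_div_mul_cancel hp0.ne', ENNReal.rpow_one]
      calc (∫⁻ y, 𝒦 x y * F y ∂μ)
          = ∫⁻ y, (𝒦 x y ^ (1/q) * U y) * (𝒦 x y ^ (1/p) * W y) ∂μ :=
            lintegral_congr h1
        _ ≤ (∫⁻ y, (𝒦 x y ^ (1/q) * U y) ^ q ∂μ) ^ (1/q)
              * (∫⁻ y, (𝒦 x y ^ (1/p) * W y) ^ p ∂μ) ^ (1/p) :=
            ENNReal.lintegral_mul_le_Lp_mul_Lq μ hqp
              (((hrpow (1/q)).comp (h𝒦measx x)).mul hUmeas).aemeasurable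
              (((hrpow (1/p)).comp (h𝒦measx x)).mul hWmeas).aemeasurable
        _ = A x ^ (1/q) * B x ^ (1/p) := by
            rw [hA, hB, lintegral_congr h2, lintegral_congr h3]
    calc (∫⁻ y, 𝒦 x y * F y ∂μ) ^ p ≤ (A x ^ (1/q) * B x ^ (1/p)) ^ p :=
          ENNReal.rpow_le_rpow holder hp0.le
      _ = A x ^ (p/q) * B x := by
          rw [ENNReal.mul_rpow_of_nonneg _ _ hp0.le, ← ENNReal.rpow_mul, ← ENNReal.rpow_mul,
            one_div_mul_cancel hp0.ne']
          rw [show (1/q * p : ℝ) = p / q by ring, ENNReal.rpow_one]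
  -- Step 3: a.e. bound on A
  have step3 : ∀ᵐ x ∂μ, A x ≤ ENNReal.ofReal C * V x ^ q := by
    filter_upwards [hSchur₁] with x hx
    calc A x = ∫⁻ y, ENNReal.ofReal (K x y * u y ^ q) ∂μ := by
          refine lintegral_congr fun y => ?_
          rw [ENNReal.ofReal_mul (hKpos x y), ENNReal.ofReal_rpow_of_pos (hu y)]
      _ ≤ ENNReal.ofReal (C * v x ^ q) := hx
      _ = ENNReal.ofReal C * V x ^ q := by
          rw [ENNReal.ofReal_mul hC.le, ENNReal.ofReal_rpow_of_pos (hv x)]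
  -- main chain
  have key : (∫⁻ x, ENNReal.ofReal (|∫ y, K x y * f y ∂μ| ^ p) ∂μ)
      ≤ (ENNReal.ofReal C) ^ (p/q) * ∫⁻ x, V x ^ p * B x ∂μ := by
    rw [← lintegral_const_mul' _ _
      (ENNReal.rpow_ne_top_of_nonneg (by positivity) ENNReal.ofReal_ne_top)]
    refine lintegral_mono_ae ?_
    filter_upwards [step3] with x hx
    calc ENNReal.ofReal (|∫ y, K x y * f y ∂μ| ^ p)
        ≤ A x ^ (p/q) * B x := (step1 x).trans (step2 x)
      _ ≤ (ENNReal.ofReal C * V x ^ q) ^ (p/q) * B x :=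
          mul_le_mul_left (ENNReal.rpow_le_rpow hx (by positivity)) _
      _ = ENNReal.ofReal C ^ (p/q) * (V x ^ p * B x) := by
          rw [ENNReal.mul_rpow_of_nonneg _ _ (by positivity), ← ENNReal.rpow_mul]
          rw [show (q * (p/q) : ℝ) = p by field_simp, mul_assoc]
  -- Tonelli and the second Schur condition
  have swap : (∫⁻ x, V x ^ p * B x ∂μ)
      = ∫⁻ y, W y ^ p * ∫⁻ x, 𝒦 x y * V x ^ p ∂μ ∂μ := by
    have hmeas : AEMeasurable (fun z : X × X => V z.1 ^ p * (𝒦 z.1 z.2 * W z.2 ^ p))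
        (μ.prod μ) := by
      refine Measurable.aemeasurable ?_
      exact (((hrpow p).comp (hVmeas.comp measurable_fst)).mul
        (h𝒦meas.mul ((hrpow p).comp (hWmeas.comp measurable_snd))))
    calc (∫⁻ x, V x ^ p * B x ∂μ)
        = ∫⁻ x, ∫⁻ y, V x ^ p * (𝒦 x y * W y ^ p) ∂μ ∂μ := by
          refine lintegral_congr fun x => ?_
          rw [hB, ← lintegral_const_mul' _ _
            (ENNReal.rpow_ne_top_of_nonneg hp0.le ENNReal.ofReal_ne_top)]
      _ = ∫⁻ y, ∫⁻ x, V x ^ p * (𝒦 x y * W y ^ p) ∂μ ∂μ :=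
          lintegral_lintegral_swap hmeas
      _ = ∫⁻ y, W y ^ p * ∫⁻ x, 𝒦 x y * V x ^ p ∂μ ∂μ := by
          refine lintegral_congr fun y => ?_
          have hWtop : W y ^ p ≠ ⊤ :=
            ENNReal.rpow_ne_top_of_nonneg hp0.le
              (ENNReal.mul_ne_top ENNReal.ofReal_ne_top (ENNReal.inv_ne_top.2 (hU0 y)))
          rw [← lintegral_const_mul' _ _ hWtop]
          refine lintegral_congr fun x => ?_
          ring
  have step4 : (∫⁻ y, W y ^ p * ∫⁻ x, 𝒦 x y * V x ^ p ∂μ ∂μ)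
      ≤ ENNReal.ofReal C * ∫⁻ y, F y ^ p ∂μ := by
    rw [← lintegral_const_mul' _ _ (by finiteness)]
    refine lintegral_mono_ae ?_
    filter_upwards [hSchur₂] with y hy
    have hinner : (∫⁻ x, 𝒦 x y * V x ^ p ∂μ) ≤ ENNReal.ofReal C * U y ^ p := by
      calc (∫⁻ x, 𝒦 x y * V x ^ p ∂μ)
          = ∫⁻ x, ENNReal.ofReal (K x y * v x ^ p) ∂μ := by
            refine lintegral_congr fun x => ?_
            rw [ENNReal.ofReal_mul (hKpos x y), ENNReal.ofReal_rpow_of_pos (hv x)]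
        _ ≤ ENNReal.ofReal (C * u y ^ p) := hy
        _ = ENNReal.ofReal C * U y ^ p := by
            rw [ENNReal.ofReal_mul hC.le, ENNReal.ofReal_rpow_of_pos (hu y)]
    calc W y ^ p * ∫⁻ x, 𝒦 x y * V x ^ p ∂μ
        ≤ W y ^ p * (ENNReal.ofReal C * U y ^ p) := by gcongr
      _ = ENNReal.ofReal C * (W y ^ p * U y ^ p) := by ring
      _ = ENNReal.ofReal C * F y ^ p := by
          rw [← ENNReal.mul_rpow_of_nonneg _ _ hp0.le, hW, mul_assoc,
            ENNReal.inv_mul_cancel (hU0 y) (hUtop y), mul_one]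
  -- put everything together
  have final : (∫⁻ x, ENNReal.ofReal (|∫ y, K x y * f y ∂μ| ^ p) ∂μ)
      ≤ (ENNReal.ofReal C) ^ (p/q) * (ENNReal.ofReal C * ∫⁻ y, F y ^ p ∂μ) := by
    refine key.trans ?_
    rw [swap]
    exact mul_le_mul_right step4 _
  calc (∫⁻ x, ENNReal.ofReal (|∫ y, K x y * f y ∂μ| ^ p) ∂μ)
      ≤ (ENNReal.ofReal C) ^ (p/q) * (ENNReal.ofReal C * ∫⁻ y, F y ^ p ∂μ) := final
    _ = ENNReal.ofReal (C ^ p) * ∫⁻ x, ENNReal.ofReal (|f x| ^ p) ∂μ := by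
        have hCpow : (ENNReal.ofReal C) ^ (p/q) * ENNReal.ofReal C = ENNReal.ofReal (C ^ p) := by
          calc (ENNReal.ofReal C) ^ (p/q) * ENNReal.ofReal C
              = (ENNReal.ofReal C) ^ (p/q) * (ENNReal.ofReal C) ^ (1:ℝ) := by
                rw [ENNReal.rpow_one]
            _ = (ENNReal.ofReal C) ^ (p/q + 1) :=
                (ENNReal.rpow_add_of_nonneg _ _ (by positivity) zero_le_one).symm
            _ = (ENNReal.ofReal C) ^ p := by rw [hpq.div_conj_eq_sub_one, sub_add_cancel]
            _ = ENNReal.ofReal (C ^ p) := ENNReal.ofReal_rpow_of_pos hC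
        rw [← mul_assoc, hCpow]
        congr 1
        exact lintegral_congr fun x => ENNReal.ofReal_rpow_of_nonneg (abs_nonneg _) hp0.le
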